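/- For 0 ≤ ρ₁ < 1, 0 ≤ ρ₂ < 1 with ρ₁ρ₂ > 0, one has (ρ₁+ρ₂)(1+ρ₁ρ₂)/(4ρ₁ρ₂) ≥ 1; consequently the symmetric density f(θ) ∝ [(1+ρ₁²−2ρ₁cos θ)(1+ρ₂²−2ρ₂cos θ)]⁻¹ on the circle has stationary points only where sin θ = 0, and is unimodal with mode at θ = 0. -/

import Mathlib

open Real

private lemma ewc_gpos {ρ : ℝ} (h0 : 0 ≤ ρ) (h1 : ρ < 1) (θ : ℝ) :
    0 < 1 + ρ ^ 2 - 2 * ρ * Real.cos θ := by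
  nlinarith [Real.cos_le_one θ, sq_nonneg (1 - ρ)]

private lemma ewc_hg (ρ₁ ρ₂ θ : ℝ) :
    HasDerivAt (fun θ : ℝ =>
        (1 + ρ₁ ^ 2 - 2 * ρ₁ * Real.cos θ) * (1 + ρ₂ ^ 2 - 2 * ρ₂ * Real.cos θ))
      (2 * ρ₁ * Real.sin θ * (1 + ρ₂ ^ 2 - 2 * ρ₂ * Real.cos θ) +
        (1 + ρ₁ ^ 2 - 2 * ρ₁ * Real.cos θ) * (2 * ρ₂ * Real.sin θ)) θ := by
  have h1 : HasDerivAt (fun θ : ℝ => 1 + ρ₁ ^ 2 - 2 * ρ₁ * Real.cos θ)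
      (2 * ρ₁ * Real.sin θ) θ := by
    have := ((Real.hasDerivAt_cos θ).const_mul (2 * ρ₁)).const_sub (1 + ρ₁ ^ 2)
    exact this.congr_deriv (by ring)
  have h2 : HasDerivAt (fun θ : ℝ => 1 + ρ₂ ^ 2 - 2 * ρ₂ * Real.cos θ)
      (2 * ρ₂ * Real.sin θ) θ := by
    have := ((Real.hasDerivAt_cos θ).const_mul (2 * ρ₂)).const_sub (1 + ρ₂ ^ 2)
    exact this.congr_deriv (by ring)
  exact h1.mul h2

/-- Symmetric case `μ₁ = μ₂ = 0` of the EWC density: the key inequality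
`(ρ₁+ρ₂)(1+ρ₁ρ₂)/(4ρ₁ρ₂) ≥ 1` holds, consequently the (unnormalized) density
`f(θ) = [(1+ρ₁²-2ρ₁cos θ)(1+ρ₂²-2ρ₂cos θ)]⁻¹` has stationary points only where
`sin θ = 0`, and is unimodal with mode at `θ = 0` (increasing on `[-π, 0]` and
decreasing on `[0, π]`). -/
theorem ewc_symmetric_unimodal (ρ₁ ρ₂ : ℝ)
    (hρ₁ : ρ₁ ∈ Set.Ico (0 : ℝ) 1) (hρ₂ : ρ₂ ∈ Set.Ico (0 : ℝ) 1) (hpos : 0 < ρ₁ * ρ₂) :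
    (ρ₁ + ρ₂) * (1 + ρ₁ * ρ₂) / (4 * (ρ₁ * ρ₂)) ≥ 1 ∧
    (∀ θ : ℝ, deriv (fun θ : ℝ =>
        ((1 + ρ₁ ^ 2 - 2 * ρ₁ * Real.cos θ) * (1 + ρ₂ ^ 2 - 2 * ρ₂ * Real.cos θ))⁻¹) θ = 0 →
      Real.sin θ = 0) ∧
    MonotoneOn (fun θ : ℝ =>
        ((1 + ρ₁ ^ 2 - 2 * ρ₁ * Real.cos θ) * (1 + ρ₂ ^ 2 - 2 * ρ₂ * Real.cos θ))⁻¹)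
      (Set.Icc (-Real.pi) 0) ∧
    AntitoneOn (fun θ : ℝ =>
        ((1 + ρ₁ ^ 2 - 2 * ρ₁ * Real.cos θ) * (1 + ρ₂ ^ 2 - 2 * ρ₂ * Real.cos θ))⁻¹)
      (Set.Icc 0 Real.pi) := by
  obtain ⟨h10, h11⟩ := hρ₁
  obtain ⟨h20, h21⟩ := hρ₂
  have hρ1 : 0 < ρ₁ := by
    rcases h10.lt_or_eq with h | h
    · exact h
    · exfalso; nlinarith
  have hρ2 : 0 < ρ₂ := by
    rcases h20.lt_or_eq with h | h
    · exact h
    · exfalso; nlinarith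
  set g : ℝ → ℝ := fun θ : ℝ =>
    (1 + ρ₁ ^ 2 - 2 * ρ₁ * Real.cos θ) * (1 + ρ₂ ^ 2 - 2 * ρ₂ * Real.cos θ) with hg_def
  have hgpos : ∀ θ, 0 < g θ := fun θ =>
    mul_pos (ewc_gpos h10 h11 θ) (ewc_gpos h20 h21 θ)
  have hf : ∀ θ : ℝ, HasDerivAt (fun θ : ℝ => (g θ)⁻¹)
      (-(2 * ρ₁ * Real.sin θ * (1 + ρ₂ ^ 2 - 2 * ρ₂ * Real.cos θ) +
        (1 + ρ₁ ^ 2 - 2 * ρ₁ * Real.cos θ) * (2 * ρ₂ * Real.sin θ)) / (g θ) ^ 2) θ :=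
    fun θ => (ewc_hg ρ₁ ρ₂ θ).inv (hgpos θ).ne'
  refine ⟨?_, ?_, ?_, ?_⟩
  · rw [ge_iff_le, le_div_iff₀ (by positivity)]
    nlinarith [mul_nonneg h10 (sq_nonneg (1 - ρ₂)), mul_nonneg h20 (sq_nonneg (1 - ρ₁))]
  · intro θ hθ
    rw [(hf θ).deriv] at hθ
    have h2 : 2 * ρ₁ * Real.sin θ * (1 + ρ₂ ^ 2 - 2 * ρ₂ * Real.cos θ) +
        (1 + ρ₁ ^ 2 - 2 * ρ₁ * Real.cos θ) * (2 * ρ₂ * Real.sin θ) = 0 := by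
      have := hgpos θ
      field_simp at hθ
      linarith
    have hc : Real.sin θ *
        (2 * ρ₁ * (1 + ρ₂ ^ 2 - 2 * ρ₂ * Real.cos θ) +
          2 * ρ₂ * (1 + ρ₁ ^ 2 - 2 * ρ₁ * Real.cos θ)) = 0 := by linarith [h2]; 
    rcases mul_eq_zero.mp hc with h | h
    · exact h
    · exfalso
      have p1 := ewc_gpos h10 h11 θ
      have p2 := ewc_gpos h20 h21 θ
      nlinarith
  · -- increasing on [-π, 0]
    have hganti : AntitoneOn g (Set.Icc (-Real.pi) 0) := by
      apply antitoneOn_of_deriv_nonpos (convex_Icc _ _)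
      · exact Continuous.continuousOn (by continuity)
      · intro x hx
        exact (ewc_hg ρ₁ ρ₂ x).differentiableAt.differentiableWithinAt
      · intro x hx
        rw [interior_Icc] at hx
        rw [(ewc_hg ρ₁ ρ₂ x).deriv]
        have hs : Real.sin x ≤ 0 :=
          Real.sin_nonpos_of_nonpos_of_neg_pi_le hx.2.le hx.1.le
        have p1 := ewc_gpos h10 h11 x
        have p2 := ewc_gpos h20 h21 x
        nlinarith [mul_nonneg (mul_nonneg hρ1.le (neg_nonneg.mpr hs)) p2.le,
          mul_nonneg (mul_nonneg hρ2.le (neg_nonneg.mpr hs)) p1.le]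
    intro a ha b hb hab
    exact inv_anti₀ (hgpos b) (hganti ha hb hab)
  · have hgmono : MonotoneOn g (Set.Icc 0 Real.pi) := by
      apply monotoneOn_of_deriv_nonneg (convex_Icc _ _)
      · exact Continuous.continuousOn (by continuity)
      · intro x hx
        exact (ewc_hg ρ₁ ρ₂ x).differentiableAt.differentiableWithinAt
      · intro x hx
        rw [interior_Icc] at hx
        rw [(ewc_hg ρ₁ ρ₂ x).deriv]
        have hs : 0 ≤ Real.sin x := Real.sin_nonneg_of_nonneg_of_le_pi hx.1.le hx.2.le
        have p1 := ewc_gpos h10 h11 x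
        have p2 := ewc_gpos h20 h21 x
        nlinarith [mul_nonneg (mul_nonneg hρ1.le hs) p2.le,
          mul_nonneg (mul_nonneg hρ2.le hs) p1.le]
    intro a ha b hb hab
    exact inv_anti₀ (hgpos a) (hgmono ha hb hab)
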